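/- Fix constants 0 < α < α' < 1. For all sufficiently large n and every integer k with c(Q_n) ≤ k ≤ e^{n^α}, one has capt_k(Q_n) ≥ ((1 − α')/2) · (n − 1) · ln n. -/

import Mathlib

open SimpleGraph Finset

/-- One step of a player in a reflexive graph: stay put (the loop) or move along an edge. -/
def stepRel {V : Type*} (G : SimpleGraph V) (u v : V) : Prop := u = v ∨ G.Adj u v

/-- `CatchIn G t c r`: with the cops currently at positions `c` and the robber at `r`
(cops to move next), the cops can guarantee to capture the robber within `t` further
rounds (a round consists of a cops' move followed by a robber's move; capture means
some cop occupies the robber's vertex). -/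
def CatchIn {V : Type*} (G : SimpleGraph V) {k : ℕ} : ℕ → (Fin k → V) → V → Prop
  | 0, c, r => ∃ i, c i = r
  | (t + 1), c, r => (∃ i, c i = r) ∨
      ∃ c' : Fin k → V, (∀ i, stepRel G (c i) (c' i)) ∧
        ((∃ i, c' i = r) ∨ ∀ r', stepRel G r r' → CatchIn G t c' r')

/-- `k` cops have a strategy capturing the robber within `t` rounds (not counting
round 0, in which the cops choose starting positions and then the robber, knowing
the cops' positions, chooses hers). -/
def CopsWinIn {V : Type*} (G : SimpleGraph V) (k t : ℕ) : Prop :=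
  ∃ c₀ : Fin k → V, ∀ r₀ : V, CatchIn G t c₀ r₀

/-- The cop number: the least `k` such that `k` cops have a winning strategy. -/
noncomputable def copNumber {V : Type*} (G : SimpleGraph V) : ℕ :=
  sInf {k | ∃ t, CopsWinIn G k t}

/-- The `k`-capture time: the least `t` such that `k` cops can guarantee capture
within `t` rounds. -/
noncomputable def captTime {V : Type*} (G : SimpleGraph V) (k : ℕ) : ℕ :=
  sInf {t | CopsWinIn G k t}

/-- The metric `k`-center radius: the least `r` such that some set of at most `k`
vertices is within distance `r` of every vertex. -/
noncomputable def radK {V : Type*} (G : SimpleGraph V) (k : ℕ) : ℕ :=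
  sInf {r | ∃ S : Finset V, S.Nonempty ∧ S.card ≤ k ∧ ∀ v, ∃ s ∈ S, G.dist v s ≤ r}

/-- `H ⊆ V(G)` induces a retract of the reflexive graph `G`: there is a map
`f : V(G) → H` fixing `H` pointwise such that every edge `uv` of `G` is sent to a
single vertex or to an edge. -/
def IsRetract {V : Type*} (G : SimpleGraph V) (H : Set V) : Prop :=
  ∃ f : V → V, (∀ v, f v ∈ H) ∧ (∀ v ∈ H, f v = v) ∧
    ∀ u v, G.Adj u v → f u = f v ∨ G.Adj (f u) (f v)

/-- The hypercube `Q n`: vertices are binary strings of length `n`, adjacent iff they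
differ in exactly one coordinate (loops at every vertex are implicit). -/
def hypercube (n : ℕ) : SimpleGraph (Fin n → Bool) :=
  SimpleGraph.fromRel (fun u v => ∃ j, u j ≠ v j ∧ ∀ i, i ≠ j → u i = v i)

namespace CaptL

variable {n : ℕ}

abbrev V (n : ℕ) := Fin n → Bool

def flipv (j : Fin n) (r : V n) : V n := Function.update r j (!(r j))

lemma flipv_apply_self (j : Fin n) (r : V n) : flipv j r j = !(r j) :=
  Function.update_self _ _ _

lemma flipv_apply_ne (j i : Fin n) (r : V n) (h : i ≠ j) : flipv j r i = r i :=
  Function.update_of_ne h _ _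

lemma adj_flipv (j : Fin n) (r : V n) : (hypercube n).Adj r (flipv j r) := by
  rw [hypercube, SimpleGraph.fromRel_adj]
  constructor
  · intro h
    have := congrFun h j
    rw [flipv_apply_self] at this
    exact (Bool.self_ne_not _) this
  · left
    exact ⟨j, by simp [flipv_apply_self], fun i hi => (flipv_apply_ne j i r hi).symm⟩

lemma hammingDist_eq_card (x y : V n) :
    hammingDist x y = (univ.filter fun i => x i ≠ y i).card := rfl

lemma dist_flipv (c r : V n) (j : Fin n) :
    hammingDist c (flipv j r) =
      if c j = r j then hammingDist c r + 1 else hammingDist c r - 1 := by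
  rw [hammingDist_eq_card, hammingDist_eq_card]
  by_cases h : c j = r j
  · rw [if_pos h]
    have hset : (univ.filter fun i => c i ≠ flipv j r i) =
        insert j (univ.filter fun i => c i ≠ r i) := by
      ext i
      by_cases hij : i = j
      · subst hij
        simp [flipv_apply_self, h]
      · simp [hij, flipv_apply_ne j i r hij]
    rw [hset, Finset.card_insert_of_notMem (by simp [h])]
  · rw [if_neg h]
    have hset : (univ.filter fun i => c i ≠ flipv j r i) =
        (univ.filter fun i => c i ≠ r i).erase j := by
      ext i
      by_cases hij : i = j
      · subst hij
        simp [flipv_apply_self, h]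
      · simp [hij, flipv_apply_ne j i r hij]
    rw [hset, Finset.card_erase_of_mem (by simp [h])]

lemma stepRel_hammingDist {u v : V n} (h : stepRel (hypercube n) u v) :
    hammingDist u v ≤ 1 := by
  rcases h with rfl | h
  · simp [hammingDist_self]
  · rw [hypercube, SimpleGraph.fromRel_adj] at h
    rcases h.2 with ⟨j, _, hall⟩ | ⟨j, _, hall⟩
    · calc hammingDist u v ≤ ({j} : Finset (Fin n)).card := by
            apply Finset.card_le_card
            intro i hi
            simp only [hammingDist_eq_card, Finset.mem_filter] at hi
            simp only [Finset.mem_singleton]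
            by_contra hij
            exact hi.2 (hall i hij)
          _ = 1 := by simp
    · rw [hammingDist_comm]
      calc hammingDist v u ≤ ({j} : Finset (Fin n)).card := by
            apply Finset.card_le_card
            intro i hi
            simp only [hammingDist_eq_card, Finset.mem_filter] at hi
            simp only [Finset.mem_singleton]
            by_contra hij
            exact hi.2 (hall i hij)
          _ = 1 := by simp

lemma sum_flipv (Φ : ℕ → ℝ) (c r : V n) :
    ∑ j : Fin n, Φ (hammingDist c (flipv j r)) =
      ((n : ℝ) - hammingDist c r) * Φ (hammingDist c r + 1) +
        (hammingDist c r : ℝ) * Φ (hammingDist c r - 1) := by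
  have hcong : ∀ j ∈ (univ : Finset (Fin n)), Φ (hammingDist c (flipv j r)) =
      if c j = r j then Φ (hammingDist c r + 1) else Φ (hammingDist c r - 1) := by
    intro j _
    rw [dist_flipv]
    split <;> rfl
  rw [Finset.sum_congr rfl hcong, Finset.sum_ite, Finset.sum_const, Finset.sum_const]
  have hd : (univ.filter fun j => ¬ c j = r j).card = hammingDist c r := by
    rw [hammingDist_eq_card]
  have htot : (univ.filter fun j => c j = r j).card + hammingDist c r = n := by
    rw [← hd]
    rw [Finset.card_filter_add_card_filter_not]
    simp
  have hc : ((univ.filter fun j => c j = r j).card : ℝ) = (n : ℝ) - hammingDist c r := by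
    have := congrArg (fun m : ℕ => (m : ℝ)) htot
    push_cast at this
    linarith
  rw [hd, nsmul_eq_mul, nsmul_eq_mul, hc]


lemma catchin_le (hn : 0 < n) {k : ℕ} (σ : ℝ) (hσ : 0 ≤ σ) (Φ : ℕ → ℝ)
    (hpos : ∀ d, 0 ≤ Φ d) (hanti : ∀ ⦃d e : ℕ⦄, d ≤ e → Φ e ≤ Φ d) (hΦ1 : 1 ≤ Φ 1)
    (hstar : ∀ d : ℕ, 1 ≤ d → d ≤ n →
      (d : ℝ) * Φ (d - 1) + ((n : ℝ) - d) * Φ (d + 1) ≤ (n : ℝ) * Real.exp σ * Φ (d + 1)) :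
    ∀ (t : ℕ) (c : Fin k → V n) (r : V n), CatchIn (hypercube n) t c r →
      1 ≤ Real.exp (σ * t) * ∑ i, Φ (hammingDist (c i) r) := by
  have hclose : ∀ (c : Fin k → V n) (r : V n), (∃ i, hammingDist (c i) r ≤ 1) →
      1 ≤ ∑ i, Φ (hammingDist (c i) r) := by
    intro c r ⟨i, hi⟩
    calc (1 : ℝ) ≤ Φ (hammingDist (c i) r) := le_trans hΦ1 (hanti hi)
      _ ≤ ∑ i, Φ (hammingDist (c i) r) :=
        Finset.single_le_sum (f := fun i' => Φ (hammingDist (c i') r))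
          (fun j _ => hpos _) (Finset.mem_univ i)
  have hexp1 : ∀ t : ℕ, (1 : ℝ) ≤ Real.exp (σ * t) :=
    fun t => Real.one_le_exp (by positivity)
  intro t
  induction t with
  | zero =>
    intro c r ⟨i, hi⟩
    have h1 : 1 ≤ ∑ i, Φ (hammingDist (c i) r) := hclose c r ⟨i, by simp [hi, hammingDist_self]⟩
    have := mul_le_mul (hexp1 0) h1 zero_le_one (Real.exp_nonneg _)
    simpa using this
  | succ t ih =>
    intro c r hcatch
    have main : (1:ℝ) ≤ ∑ i, Φ (hammingDist (c i) r) ∨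
        (1:ℝ) ≤ Real.exp (σ * t) * Real.exp σ * ∑ i, Φ (hammingDist (c i) r) := by
      rcases hcatch with ⟨i, hi⟩ | ⟨c', hstep, hin⟩
      · exact Or.inl (hclose c r ⟨i, by simp [hi, hammingDist_self]⟩)
      · by_cases hcc : ∃ i, c' i = r
        · rcases hcc with ⟨i, hi⟩
          left
          apply hclose c r ⟨i, ?_⟩
          have := stepRel_hammingDist (hstep i)
          rw [← hi]
          exact this
        · rcases hin with ⟨i, hi⟩ | hall
          · exact absurd ⟨i, hi⟩ hcc
          · right
            have hIH : ∀ j : Fin n, 1 ≤ Real.exp (σ * t) * ∑ i, Φ (hammingDist (c' i) (flipv j r)) := by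
              intro j
              exact ih c' (flipv j r) (hall (flipv j r) (Or.inr (adj_flipv j r)))
            have hsum : (n : ℝ) ≤ ∑ j : Fin n,
                Real.exp (σ * t) * ∑ i, Φ (hammingDist (c' i) (flipv j r)) := by
              calc (n : ℝ) = ∑ _j : Fin n, (1:ℝ) := by simp
                _ ≤ _ := Finset.sum_le_sum (fun j _ => hIH j)
            have hper : ∀ i, ∑ j : Fin n, Φ (hammingDist (c' i) (flipv j r)) ≤
                (n : ℝ) * Real.exp σ * Φ (hammingDist (c i) r) := by
              intro i
              rw [sum_flipv]
              set d := hammingDist (c' i) r with hd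
              have hd1 : 1 ≤ d := by
                rcases Nat.eq_zero_or_pos d with h0 | h1
                · exact absurd ⟨i, hammingDist_eq_zero.mp (hd ▸ h0)⟩ hcc
                · exact h1
              have hdn : d ≤ n := by
                have := hammingDist_le_card_fintype (x := c' i) (y := r)
                simpa using this
              have h1 : ((n : ℝ) - d) * Φ (d + 1) + (d : ℝ) * Φ (d - 1) ≤
                  (n : ℝ) * Real.exp σ * Φ (d + 1) := by
                have := hstar d hd1 hdn
                linarith
              refine le_trans h1 ?_
              have hmono : Φ (d + 1) ≤ Φ (hammingDist (c i) r) := by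
                apply hanti
                calc hammingDist (c i) r ≤ hammingDist (c i) (c' i) + d :=
                      hammingDist_triangle _ _ _
                  _ ≤ 1 + d := by
                      have := stepRel_hammingDist (hstep i)
                      omega
                  _ = d + 1 := by omega
              exact mul_le_mul_of_nonneg_left hmono (by positivity)
            have hsum2 : (n:ℝ) ≤ Real.exp (σ * t) *
                ((n : ℝ) * Real.exp σ * ∑ i, Φ (hammingDist (c i) r)) := by
              refine le_trans hsum ?_
              rw [← Finset.mul_sum]
              apply mul_le_mul_of_nonneg_left _ (Real.exp_nonneg _)
              rw [Finset.sum_comm]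
              calc ∑ i, ∑ j : Fin n, Φ (hammingDist (c' i) (flipv j r))
                  ≤ ∑ i, (n : ℝ) * Real.exp σ * Φ (hammingDist (c i) r) :=
                    Finset.sum_le_sum (fun i _ => hper i)
                _ = (n : ℝ) * Real.exp σ * ∑ i, Φ (hammingDist (c i) r) := by
                    rw [Finset.mul_sum]
            have hnpos : (0:ℝ) < n := by exact_mod_cast hn
            have h' : (n:ℝ) * 1 ≤ (n:ℝ) *
                (Real.exp (σ * ↑t) * Real.exp σ * ∑ i, Φ (hammingDist (c i) r)) := by
              calc (n:ℝ) * 1 = (n:ℝ) := mul_one _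
                _ ≤ Real.exp (σ * t) *
                    ((n : ℝ) * Real.exp σ * ∑ i, Φ (hammingDist (c i) r)) := hsum2
                _ = (n:ℝ) * (Real.exp (σ * ↑t) * Real.exp σ *
                    ∑ i, Φ (hammingDist (c i) r)) := by ring
            exact le_of_mul_le_mul_left h' hnpos
    have hrw : Real.exp (σ * ((t:ℝ)+1)) = Real.exp (σ * t) * Real.exp σ := by
      rw [← Real.exp_add]; ring_nf
    have hsnn : (0:ℝ) ≤ ∑ i, Φ (hammingDist (c i) r) :=
      Finset.sum_nonneg (fun _ _ => hpos _)
    rcases main with h | h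
    · push_cast
      rw [hrw]
      have hE : (1:ℝ) ≤ Real.exp (σ * t) * Real.exp σ := by
        have := mul_le_mul (hexp1 t) (Real.one_le_exp hσ) zero_le_one (Real.exp_nonneg _)
        simpa using this
      calc (1:ℝ) ≤ ∑ i, Φ (hammingDist (c i) r) := h
        _ ≤ (Real.exp (σ * t) * Real.exp σ) * ∑ i, Φ (hammingDist (c i) r) :=
          le_mul_of_one_le_left hsnn hE
    · push_cast
      rw [hrw]
      linarith [h]

lemma sum_ham (f : ℕ → ℝ) (c : V n) :
    ∑ r : V n, f (hammingDist c r) = ∑ d ∈ range (n+1), (n.choose d : ℝ) * f d := by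
  classical
  let e : V n ≃ Finset (Fin n) :=
    { toFun := fun r => univ.filter fun i => c i ≠ r i
      invFun := fun s => fun i => if i ∈ s then !(c i) else c i
      left_inv := by
        intro r
        funext i
        by_cases h : c i = r i
        · simp [h]
        · simp only [Finset.mem_filter, Finset.mem_univ, true_and, h, not_false_iff, if_pos]
          cases hc : c i <;> cases hr : r i <;> simp_all
      right_inv := by
        intro s
        ext i
        by_cases h : i ∈ s
        · simp [h]
        · simp [h] }
  have hcard : ∀ r : V n, hammingDist c r = (e r).card := fun r => rfl
  calc ∑ r : V n, f (hammingDist c r) = ∑ r : V n, f ((e r).card) := by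
        exact Finset.sum_congr rfl fun r _ => by rw [hcard]
    _ = ∑ s : Finset (Fin n), f s.card := Equiv.sum_comp e (fun s => f s.card)
    _ = ∑ s ∈ (univ : Finset (Fin n)).powerset, f s.card := by
        rw [Finset.powerset_univ]
    _ = ∑ d ∈ range ((univ : Finset (Fin n)).card + 1),
          ∑ s ∈ Finset.powersetCard d (univ : Finset (Fin n)), f s.card :=
        Finset.sum_powerset _ _
    _ = ∑ d ∈ range (n+1), (n.choose d : ℝ) * f d := by
        rw [Finset.card_univ, Fintype.card_fin]
        refine Finset.sum_congr rfl fun d _ => ?_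
        have := Finset.sum_powersetCard d (univ : Finset (Fin n)) f
        rw [this, Finset.card_univ, Fintype.card_fin, nsmul_eq_mul]

lemma copswin_bound (hn : 0 < n) {k t : ℕ} (σ : ℝ) (hσ : 0 ≤ σ) (Φ : ℕ → ℝ)
    (hpos : ∀ d, 0 ≤ Φ d) (hanti : ∀ ⦃d e : ℕ⦄, d ≤ e → Φ e ≤ Φ d) (hΦ1 : 1 ≤ Φ 1)
    (hstar : ∀ d : ℕ, 1 ≤ d → d ≤ n →
      (d : ℝ) * Φ (d - 1) + ((n : ℝ) - d) * Φ (d + 1) ≤ (n : ℝ) * Real.exp σ * Φ (d + 1))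
    (hwin : CopsWinIn (hypercube n) k t) :
    ((2:ℝ))^n ≤ Real.exp (σ * t) * k * ∑ d ∈ range (n+1), (n.choose d : ℝ) * Φ d := by
  obtain ⟨c₀, hc⟩ := hwin
  have h1 : ∀ r₀ : V n, 1 ≤ Real.exp (σ * t) * ∑ i, Φ (hammingDist (c₀ i) r₀) :=
    fun r₀ => catchin_le hn σ hσ Φ hpos hanti hΦ1 hstar t c₀ r₀ (hc r₀)
  calc ((2:ℝ))^n = ∑ _r : V n, (1:ℝ) := by
        rw [Finset.sum_const, Finset.card_univ]
        simp [Fintype.card_fun]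
    _ ≤ ∑ r₀ : V n, Real.exp (σ * t) * ∑ i, Φ (hammingDist (c₀ i) r₀) :=
        Finset.sum_le_sum fun r _ => h1 r
    _ = Real.exp (σ * t) * ∑ r₀ : V n, ∑ i, Φ (hammingDist (c₀ i) r₀) := by
        rw [Finset.mul_sum]
    _ = Real.exp (σ * t) * ∑ i : Fin k, ∑ r₀ : V n, Φ (hammingDist (c₀ i) r₀) := by
        rw [Finset.sum_comm]
    _ = Real.exp (σ * t) * ∑ _i : Fin k, ∑ d ∈ range (n+1), (n.choose d:ℝ) * Φ d := by
        congr 1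
        exact Finset.sum_congr rfl fun i _ => sum_ham Φ (c₀ i)
    _ = Real.exp (σ * t) * k * ∑ d ∈ range (n+1), (n.choose d:ℝ) * Φ d := by
        rw [Finset.sum_const, Finset.card_univ, Fintype.card_fin, nsmul_eq_mul]
        ring

lemma catchin_zero_cops {W : Type*} (G : SimpleGraph W) (t : ℕ) (c : Fin 0 → W) (r : W) :
    ¬ CatchIn G t c r := by
  induction t generalizing c r with
  | zero => rintro ⟨i, _⟩; exact i.elim0
  | succ t ih =>
    rintro (⟨i, _⟩ | ⟨c', _, (⟨i, _⟩ | hall)⟩)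
    · exact i.elim0
    · exact i.elim0
    · exact ih c' r (hall r (Or.inl rfl))

lemma catchin_comp_surj {W : Type*} (G : SimpleGraph W) {k m : ℕ} (f : Fin k → Fin m)
    (hf : Function.Surjective f) :
    ∀ (t : ℕ) (c : Fin m → W) (r : W), CatchIn G t c r → CatchIn G t (c ∘ f) r := by
  intro t
  induction t with
  | zero =>
    rintro c r ⟨i, hi⟩
    obtain ⟨i', hi'⟩ := hf i
    exact ⟨i', by simp [Function.comp, hi', hi]⟩
  | succ t ih =>
    rintro c r (⟨i, hi⟩ | ⟨c', hstep, hin⟩)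
    · obtain ⟨i', hi'⟩ := hf i
      exact Or.inl ⟨i', by simp [Function.comp, hi', hi]⟩
    · refine Or.inr ⟨c' ∘ f, fun i => hstep (f i), ?_⟩
      rcases hin with ⟨i, hi⟩ | hall
      · obtain ⟨i', hi'⟩ := hf i
        exact Or.inl ⟨i', by simp [Function.comp, hi', hi]⟩
      · exact Or.inr fun r' hr' => ih c' r' (hall r' hr')

lemma copswin_top (n : ℕ) : CopsWinIn (hypercube n) (2^n) 0 := by
  have hcard : Fintype.card (V n) = 2^n := by simp [Fintype.card_fun]
  refine ⟨fun i => (Fintype.equivFin (V n)).symm (Fin.cast hcard.symm i), fun r₀ => ?_⟩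
  exact ⟨Fin.cast hcard (Fintype.equivFin (V n) r₀), by simp⟩

lemma exists_copswin {n k : ℕ} (hk : copNumber (hypercube n) ≤ k) :
    ∃ t, CopsWinIn (hypercube n) k t := by
  have hne : {k' | ∃ t, CopsWinIn (hypercube n) k' t}.Nonempty := ⟨2^n, 0, copswin_top n⟩
  obtain ⟨t, hwt⟩ : ∃ t, CopsWinIn (hypercube n) (copNumber (hypercube n)) t :=
    Nat.sInf_mem hne
  set m := copNumber (hypercube n) with hm
  have hm1 : m ≠ 0 := by
    intro h0
    rw [h0] at hwt
    obtain ⟨c₀, hc⟩ := hwt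
    exact catchin_zero_cops _ t c₀ (fun _ => false) (hc _)
  refine ⟨t, ?_⟩
  obtain ⟨c₀, hc⟩ := hwt
  have hmk : m ≤ k := hk
  have hmpos : 0 < m := Nat.pos_of_ne_zero hm1
  let f : Fin k → Fin m := fun i => ⟨min i.val (m-1), by omega⟩
  have hf : Function.Surjective f := by
    intro j
    have hj : j.val < m := j.2
    refine ⟨⟨j.val, lt_of_lt_of_le hj hmk⟩, ?_⟩
    apply Fin.ext
    simp only [f]
    omega
  exact ⟨c₀ ∘ f, fun r₀ => catchin_comp_surj _ f hf t c₀ r₀ (hc r₀)⟩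

lemma copswin_captTime {n k : ℕ} (hk : copNumber (hypercube n) ≤ k) :
    CopsWinIn (hypercube n) k (captTime (hypercube n) k) :=
  Nat.sInf_mem (exists_copswin hk)

noncomputable def Phi (x : ℝ) (d : ℕ) : ℝ :=
  if d = 0 then Real.sqrt (1 + x/2)
  else (∏ j ∈ Finset.Icc 2 d, Real.sqrt (1 + x / (j:ℕ)))⁻¹

section PhiLemmas

variable {x : ℝ}

lemma sqrt_fact_one_le (hx : 0 ≤ x) (j : ℕ) : (1:ℝ) ≤ Real.sqrt (1 + x / (j:ℕ)) := by
  rw [Real.one_le_sqrt]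
  have : (0:ℝ) ≤ x / (j:ℕ) := by positivity
  linarith

lemma prod_one_le' (hx : 0 ≤ x) (s : Finset ℕ) :
    (1:ℝ) ≤ ∏ j ∈ s, Real.sqrt (1 + x / (j:ℕ)) := by
  calc (1:ℝ) = ∏ _j ∈ s, (1:ℝ) := (Finset.prod_const_one).symm
    _ ≤ _ := Finset.prod_le_prod (fun _ _ => zero_le_one) (fun j _ => sqrt_fact_one_le hx j)

lemma prod_one_le (hx : 0 ≤ x) (d : ℕ) :
    (1:ℝ) ≤ ∏ j ∈ Finset.Icc 2 d, Real.sqrt (1 + x / (j:ℕ)) :=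
  prod_one_le' hx _

lemma Phi_pos (hx : 0 ≤ x) (d : ℕ) : 0 < Phi x d := by
  unfold Phi
  split
  · have : (0:ℝ) ≤ x/2 := by positivity
    exact Real.sqrt_pos.mpr (by linarith)
  · exact inv_pos.mpr (lt_of_lt_of_le one_pos (prod_one_le hx d))

lemma Phi_one : Phi x 1 = 1 := by
  unfold Phi
  rw [if_neg (by omega), Finset.Icc_eq_empty (by omega), Finset.prod_empty, inv_one]

lemma Phi_zero (x : ℝ) : Phi x 0 = Real.sqrt (1 + x/2) := by unfold Phi; rw [if_pos rfl]

lemma Phi_zero_ge (hx : 0 ≤ x) : 1 ≤ Phi x 0 := by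
  rw [Phi_zero, Real.one_le_sqrt]
  have : (0:ℝ) ≤ x/2 := by positivity
  linarith

lemma Phi_le_one (hx : 0 ≤ x) (d : ℕ) (hd : 1 ≤ d) : Phi x d ≤ 1 := by
  unfold Phi
  rw [if_neg (by omega)]
  exact inv_le_one_of_one_le₀ (prod_one_le hx d)

lemma Phi_anti (hx : 0 ≤ x) : ∀ ⦃d e : ℕ⦄, d ≤ e → Phi x e ≤ Phi x d := by
  intro d e hde
  rcases Nat.eq_zero_or_pos d with rfl | hd1
  · rcases Nat.eq_zero_or_pos e with rfl | he1
    · exact le_refl _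
    · exact le_trans (Phi_le_one hx e he1) (Phi_zero_ge hx)
  · have he1 : 1 ≤ e := le_trans hd1 hde
    unfold Phi
    rw [if_neg (by omega), if_neg (by omega)]
    have hmono : (∏ j ∈ Finset.Icc 2 d, Real.sqrt (1 + x / (j:ℕ))) ≤
        ∏ j ∈ Finset.Icc 2 e, Real.sqrt (1 + x / (j:ℕ)) := by
      rw [← Finset.prod_sdiff (Finset.Icc_subset_Icc_right hde)]
      exact le_mul_of_one_le_left (le_trans zero_le_one (prod_one_le hx d))
        (prod_one_le' hx _)
    exact inv_anti₀ (lt_of_lt_of_le one_pos (prod_one_le hx d)) hmono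

lemma Phi_succ (d : ℕ) (hd : 1 ≤ d) :
    Phi x (d+1) = Phi x d * (Real.sqrt (1 + x / ((d+1 : ℕ):ℝ)))⁻¹ := by
  unfold Phi
  rw [if_neg (by omega), if_neg (by omega),
    Finset.prod_Icc_succ_top (by omega : 2 ≤ d + 1), mul_inv]

lemma Phi_star (hx : 0 ≤ x) (d : ℕ) (hd : 1 ≤ d) :
    (d:ℝ) * Phi x (d-1) ≤ ((d:ℝ) + x) * Phi x (d+1) := by
  rcases Nat.lt_or_ge d 2 with hd2 | hd2
  · have hd1 : d = 1 := by omega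
    subst hd1
    have h2 : Phi x 2 = (Real.sqrt (1 + x/2))⁻¹ := by
      unfold Phi
      rw [if_neg (by omega), Finset.Icc_self, Finset.prod_singleton]
      norm_num
    simp only [Nat.sub_self, Nat.cast_one]
    rw [Phi_zero, h2, one_mul]
    have hpos : (0:ℝ) < Real.sqrt (1 + x/2) := Real.sqrt_pos.mpr (by positivity)
    rw [le_mul_inv_iff₀ hpos]
    have hs : Real.sqrt (1 + x/2) * Real.sqrt (1 + x/2) = 1 + x/2 :=
      Real.mul_self_sqrt (by positivity)
    rw [hs]
    linarith
  · obtain ⟨e, rfl⟩ : ∃ e, d = e + 2 := ⟨d - 2, by omega⟩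
    have hs1 : Phi x (e+2) = Phi x (e+1) * (Real.sqrt (1 + x / ((e+2 : ℕ):ℝ)))⁻¹ :=
      Phi_succ (e+1) (by omega)
    have hs2 : Phi x (e+3) = Phi x (e+2) * (Real.sqrt (1 + x / ((e+3 : ℕ):ℝ)))⁻¹ :=
      Phi_succ (e+2) (by omega)
    set s := Real.sqrt (1 + x / ((e+2 : ℕ):ℝ)) with hsdef
    set s' := Real.sqrt (1 + x / ((e+3 : ℕ):ℝ)) with hsdef'
    have he2pos : (0:ℝ) < ((e+2:ℕ):ℝ) := by positivity
    have hspos : 0 < s := Real.sqrt_pos.mpr (by positivity)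
    have hs'pos : 0 < s' := Real.sqrt_pos.mpr (by positivity)
    have hs'le : s' ≤ s := by
      apply Real.sqrt_le_sqrt
      have hdd : x / ((e+3:ℕ):ℝ) ≤ x / ((e+2:ℕ):ℝ) := by
        apply div_le_div_of_nonneg_left hx he2pos
        push_cast
        linarith
      linarith
    have hss : s * s = 1 + x / ((e+2:ℕ):ℝ) := Real.mul_self_sqrt (by positivity)
    have hkey : ((e:ℝ)+2) * (s * s') ≤ ((e:ℝ)+2) + x := by
      have h1 : s * s' ≤ 1 + x / ((e+2:ℕ):ℝ) := by
        calc s * s' ≤ s * s := by nlinarith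
          _ = _ := hss
      calc ((e:ℝ)+2) * (s * s') ≤ ((e:ℝ)+2) * (1 + x / ((e+2:ℕ):ℝ)) := by nlinarith
        _ = ((e:ℝ)+2) + x := by
            push_cast
            field_simp
    have hΦpos : 0 < Phi x (e+1) := Phi_pos hx _
    have hstep : (e+2) - 1 = e + 1 := rfl
    have hgoal : ((e+2:ℕ):ℝ) * Phi x (e+1) ≤ (((e+2:ℕ):ℝ) + x) * Phi x (e+3) := by
      rw [hs2, hs1]
      push_cast
      rw [show (((e:ℝ)+2) + x) * (Phi x (e+1) * s⁻¹ * s'⁻¹) =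
          ((((e:ℝ)+2) + x) * Phi x (e+1)) * (s * s')⁻¹ by rw [mul_inv]; ring]
      rw [le_mul_inv_iff₀ (by positivity)]
      have := mul_le_mul_of_nonneg_right hkey hΦpos.le
      calc ((e:ℝ)+2) * Phi x (e+1) * (s * s')
          = ((e:ℝ)+2) * (s * s') * Phi x (e+1) := by ring
        _ ≤ (((e:ℝ)+2) + x) * Phi x (e+1) := this
    rw [hstep]
    exact hgoal

lemma sqrt_factor_ge (hx : 0 ≤ x) (j : ℕ) (hj : 1 ≤ j) :
    Real.exp ((x/2) * (Real.log ((j:ℝ)+1+x) - Real.log ((j:ℝ)+x))) ≤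
      Real.sqrt (1 + x / (j:ℕ)) := by
  have hja : (1:ℝ) ≤ (j:ℝ) := by exact_mod_cast hj
  have hjpos : (0:ℝ) < (j:ℝ) := by linarith
  have hypos : (0:ℝ) < 1 + x / (j:ℝ) := by positivity
  have hsqrt : Real.sqrt (1 + x / (j:ℝ)) =
      Real.exp ((1/2) * Real.log (1 + x / (j:ℝ))) := by
    rw [Real.sqrt_eq_rpow, Real.rpow_def_of_pos hypos]
    ring_nf
  rw [hsqrt, Real.exp_le_exp]
  have h1 : Real.log ((j:ℝ)+1+x) - Real.log ((j:ℝ)+x) ≤ 1 / ((j:ℝ) + x) := by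
    rw [← Real.log_div (by positivity) (by positivity)]
    have := Real.log_le_sub_one_of_pos
      (show (0:ℝ) < ((j:ℝ)+1+x) / ((j:ℝ)+x) by positivity)
    have heq : ((j:ℝ)+1+x) / ((j:ℝ)+x) - 1 = 1 / ((j:ℝ)+x) := by
      field_simp
      ring
    linarith
  have h2 : x / ((j:ℝ) + x) ≤ Real.log (1 + x / (j:ℝ)) := by
    have hinv : Real.log ((1 + x / (j:ℝ))⁻¹) ≤ (1 + x / (j:ℝ))⁻¹ - 1 :=
      Real.log_le_sub_one_of_pos (by positivity)
    rw [Real.log_inv] at hinv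
    have hj0 : (j:ℝ) ≠ 0 := ne_of_gt hjpos
    have hjx : (j:ℝ) + x ≠ 0 := by positivity
    have heq : (1 + x / (j:ℝ))⁻¹ - 1 = -(x / ((j:ℝ) + x)) := by
      have hyne : 1 + x / (j:ℝ) ≠ 0 := ne_of_gt hypos
      field_simp
      ring
    rw [heq] at hinv
    linarith
  have hx2 : (0:ℝ) ≤ x/2 := by linarith
  calc (x/2) * (Real.log ((j:ℝ)+1+x) - Real.log ((j:ℝ)+x))
      ≤ (x/2) * (1 / ((j:ℝ) + x)) := by
        apply mul_le_mul_of_nonneg_left h1 hx2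
    _ = (1/2) * (x / ((j:ℝ) + x)) := by ring
    _ ≤ (1/2) * Real.log (1 + x / (j:ℝ)) := by
        apply mul_le_mul_of_nonneg_left h2 (by norm_num)

lemma Phi_le_exp (hx : 0 ≤ x) (m : ℕ) (hm : 1 ≤ m) :
    Phi x m ≤ Real.exp (-((x/2) * (Real.log ((m:ℝ)+1+x) - Real.log (2+x)))) := by
  have hprodge : Real.exp ((x/2) * (Real.log ((m:ℝ)+1+x) - Real.log (2+x))) ≤
      ∏ j ∈ Finset.Icc 2 m, Real.sqrt (1 + x / (j:ℕ)) := by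
    have hsum : ∑ j ∈ Finset.Icc 2 m,
        ((x/2) * (Real.log ((j:ℝ)+1+x) - Real.log ((j:ℝ)+x))) =
        (x/2) * (Real.log ((m:ℝ)+1+x) - Real.log (2+x)) := by
      rw [← Finset.mul_sum]
      congr 1
      have hIcc : Finset.Icc 2 m = Finset.Ico 2 (m+1) := (Finset.Ico_add_one_right_eq_Icc 2 m).symm
      rw [hIcc, Finset.sum_Ico_eq_sum_range]
      have hcong : ∀ i ∈ range (m + 1 - 2),
          (Real.log (((2+i:ℕ):ℝ)+1+x) - Real.log (((2+i:ℕ):ℝ)+x)) =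
          (fun i : ℕ => Real.log (((i:ℝ)) + 3 + x)) i
            - (fun i : ℕ => Real.log (((i:ℝ)) + 2 + x)) i := by
        intro i _
        push_cast
        ring_nf
      rw [Finset.sum_congr rfl hcong]
      have htel := Finset.sum_range_sub (fun i : ℕ => Real.log (((i:ℝ)) + 2 + x)) (m + 1 - 2)
      have hstep : ∀ i : ℕ, Real.log (((i+1:ℕ):ℝ) + 2 + x) = Real.log ((i:ℝ) + 3 + x) := by
        intro i; push_cast; ring_nf
      calc ∑ i ∈ range (m + 1 - 2),
            (Real.log ((i:ℝ) + 3 + x) - Real.log ((i:ℝ) + 2 + x))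
          = ∑ i ∈ range (m + 1 - 2),
            (Real.log (((i+1:ℕ):ℝ) + 2 + x) - Real.log ((i:ℝ) + 2 + x)) := by
            refine Finset.sum_congr rfl fun i _ => ?_
            rw [hstep]
        _ = Real.log (((m+1-2:ℕ):ℝ) + 2 + x) - Real.log (((0:ℕ):ℝ) + 2 + x) := htel
        _ = Real.log ((m:ℝ)+1+x) - Real.log (2+x) := by
            have hc1 : ((m+1-2:ℕ):ℝ) = (m:ℝ) - 1 := by
              have he : m + 1 - 2 = m - 1 := by omega
              rw [he, Nat.cast_sub hm]
              norm_num
            rw [hc1]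
            have hc2 : (m:ℝ) - 1 + 2 + x = (m:ℝ) + 1 + x := by ring
            have hc3 : ((0:ℕ):ℝ) + 2 + x = 2 + x := by norm_num
            rw [hc2, hc3]
    calc Real.exp ((x/2) * (Real.log ((m:ℝ)+1+x) - Real.log (2+x)))
        = ∏ j ∈ Finset.Icc 2 m,
            Real.exp ((x/2) * (Real.log ((j:ℝ)+1+x) - Real.log ((j:ℝ)+x))) := by
          rw [← Real.exp_sum, hsum]
      _ ≤ ∏ j ∈ Finset.Icc 2 m, Real.sqrt (1 + x / (j:ℕ)) :=
          Finset.prod_le_prod (fun j _ => (Real.exp_pos _).le)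
            (fun j hj => sqrt_factor_ge hx j
              (by simp only [Finset.mem_Icc] at hj; omega))
  have hΦ : Phi x m = (∏ j ∈ Finset.Icc 2 m, Real.sqrt (1 + x / (j:ℕ)))⁻¹ := by
    unfold Phi
    rw [if_neg (by omega)]
  rw [hΦ, Real.exp_neg]
  exact inv_anti₀ (Real.exp_pos _) hprodge

lemma binom_tail (n m : ℕ) (hmn : m ≤ n) :
    (∑ d ∈ range (m+1), (n.choose d : ℝ)) ≤ 7^m * (8/7)^n := by
  have hterm : ∀ d ∈ range (m+1), (n.choose d : ℝ) ≤
      7^m * ((n.choose d : ℝ) * (1/7)^d) := by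
    intro d hd
    rw [Finset.mem_range] at hd
    have hd' : d ≤ m := by omega
    have h7 : (7:ℝ)^m * (1/7)^d = 7^(m-d) := by
      have hm' : m = (m - d) + d := (Nat.sub_add_cancel hd').symm
      calc (7:ℝ)^m * (1/7)^d = 7^((m-d)+d) * (1/7)^d := by rw [← hm']
        _ = 7^(m-d) * (7^d * (1/7)^d) := by rw [pow_add, mul_assoc]
        _ = 7^(m-d) * ((7 * (1/7))^d) := by rw [mul_pow]
        _ = 7^(m-d) := by norm_num
    have h71 : (1:ℝ) ≤ 7^m * (1/7)^d := by
      rw [h7]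
      exact one_le_pow₀ (by norm_num)
    calc (n.choose d : ℝ) = (n.choose d : ℝ) * 1 := (mul_one _).symm
      _ ≤ (n.choose d : ℝ) * (7^m * (1/7)^d) :=
          mul_le_mul_of_nonneg_left h71 (Nat.cast_nonneg _)
      _ = 7^m * ((n.choose d : ℝ) * (1/7)^d) := by ring
  calc (∑ d ∈ range (m+1), (n.choose d : ℝ))
      ≤ ∑ d ∈ range (m+1), 7^m * ((n.choose d : ℝ) * (1/7)^d) :=
        Finset.sum_le_sum hterm
    _ = 7^m * ∑ d ∈ range (m+1), (n.choose d : ℝ) * (1/7)^d := by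
        rw [Finset.mul_sum]
    _ ≤ 7^m * ∑ d ∈ range (n+1), (n.choose d : ℝ) * (1/7)^d := by
        apply mul_le_mul_of_nonneg_left _ (by positivity)
        apply Finset.sum_le_sum_of_subset_of_nonneg
        · exact Finset.range_subset_range.mpr (by omega)
        · intro d _ _
          positivity
    _ = 7^m * (8/7)^n := by
        congr 1
        calc ∑ d ∈ range (n+1), (n.choose d:ℝ) * (1/7)^d
            = ∑ d ∈ range (n+1), (1/7:ℝ)^d * 1^(n-d) * (n.choose d) := by
              refine Finset.sum_congr rfl fun d _ => ?_
              rw [one_pow]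
              ring
          _ = ((1:ℝ)/7 + 1)^n := (add_pow _ _ n).symm
          _ = (8/7)^n := by norm_num

lemma sum_choose_Phi_le (hx : 0 ≤ x) (n m : ℕ) (hm : 1 ≤ m) (hmn : m ≤ n) :
    ∑ d ∈ range (n+1), (n.choose d : ℝ) * Phi x d ≤
      Phi x 0 * (7^m * (8/7)^n) + Phi x m * 2^n := by
  have hcons := Finset.sum_Ico_consecutive (fun d => (n.choose d:ℝ) * Phi x d)
    (Nat.zero_le (m+1)) (by omega : m+1 ≤ n+1)
  rw [← Finset.range_eq_Ico, ← Finset.range_eq_Ico] at hcons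
  have h1 : ∑ d ∈ range (m+1), (n.choose d:ℝ) * Phi x d ≤ Phi x 0 * (7^m * (8/7)^n) := by
    calc ∑ d ∈ range (m+1), (n.choose d:ℝ) * Phi x d
        ≤ ∑ d ∈ range (m+1), (n.choose d:ℝ) * Phi x 0 :=
          Finset.sum_le_sum fun d _ =>
            mul_le_mul_of_nonneg_left (Phi_anti hx (Nat.zero_le d)) (Nat.cast_nonneg _)
      _ = Phi x 0 * ∑ d ∈ range (m+1), (n.choose d:ℝ) := by
          rw [Finset.mul_sum]
          exact Finset.sum_congr rfl fun d _ => by ring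
      _ ≤ Phi x 0 * (7^m * (8/7)^n) :=
          mul_le_mul_of_nonneg_left (binom_tail n m hmn) (Phi_pos hx 0).le
  have h2 : ∑ d ∈ Finset.Ico (m+1) (n+1), (n.choose d:ℝ) * Phi x d ≤ Phi x m * 2^n := by
    calc ∑ d ∈ Finset.Ico (m+1) (n+1), (n.choose d:ℝ) * Phi x d
        ≤ ∑ d ∈ Finset.Ico (m+1) (n+1), (n.choose d:ℝ) * Phi x m :=
          Finset.sum_le_sum fun d hd => by
            rw [Finset.mem_Ico] at hd
            exact mul_le_mul_of_nonneg_left (Phi_anti hx (by omega : m ≤ d))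
              (Nat.cast_nonneg _)
      _ = Phi x m * ∑ d ∈ Finset.Ico (m+1) (n+1), (n.choose d:ℝ) := by
          rw [Finset.mul_sum]
          exact Finset.sum_congr rfl fun d _ => by ring
      _ ≤ Phi x m * ∑ d ∈ range (n+1), (n.choose d:ℝ) := by
          apply mul_le_mul_of_nonneg_left _ (Phi_pos hx m).le
          apply Finset.sum_le_sum_of_subset_of_nonneg
          · rw [Finset.range_eq_Ico]
            exact Finset.Ico_subset_Ico (by omega) (le_refl _)
          · intro d _ _
            exact Nat.cast_nonneg _
      _ = Phi x m * 2^n := by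
          congr 1
          rw [← Nat.cast_sum]
          rw [Nat.sum_range_choose]
          push_cast
          ring
  calc ∑ d ∈ range (n+1), (n.choose d:ℝ) * Phi x d
      = (∑ d ∈ range (m+1), (n.choose d:ℝ) * Phi x d) +
        ∑ d ∈ Finset.Ico (m+1) (n+1), (n.choose d:ℝ) * Phi x d := hcons.symm
    _ ≤ Phi x 0 * (7^m * (8/7)^n) + Phi x m * 2^n := add_le_add h1 h2

end PhiLemmas

end CaptL

open CaptL Filter

set_option maxHeartbeats 1000000 in
/-- Lower bound on the capture time of hypercubes with few cops: for constants
`0 < α < α' < 1`, for all large `n` and all `c(Q_n) ≤ k ≤ e^{n^α}`,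
`capt_k(Q_n) ≥ ((1 - α')/2) (n - 1) ln n`. -/
theorem captTime_hypercube_lower_small (α α' : ℝ) (h0 : 0 < α) (h1 : α < α') (h2 : α' < 1) :
    ∃ N : ℕ, ∀ n : ℕ, N ≤ n → ∀ k : ℕ,
      copNumber (hypercube n) ≤ k → (k : ℝ) ≤ Real.exp ((n : ℝ) ^ α) →
      (1 - α') / 2 * ((n : ℝ) - 1) * Real.log n ≤ (captTime (hypercube n) k : ℝ) := by
  have hγ0 : 0 < (α + α')/2 := by linarith
  have hγ1 : (α + α')/2 < 1 := by linarith
  set γ := (α + α')/2 with hγdef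
  set δ := (1 - γ)/2 with hδdef
  have hδ0 : 0 < δ := by rw [hδdef]; linarith
  -- numeric constants
  have hlog2lb : (69/100 : ℝ) ≤ Real.log 2 := by
    have := Real.log_two_gt_d9; linarith
  have hlog2ub : Real.log 2 ≤ (7/10 : ℝ) := by
    have := Real.log_two_lt_d9; linarith
  have hlog2nn : (0:ℝ) ≤ Real.log 2 := by linarith
  have hexp2 : (7:ℝ) < Real.exp 2 := by
    have he : (2.7182818283:ℝ) < Real.exp 1 := Real.exp_one_gt_d9
    have h2' : Real.exp 2 = Real.exp 1 * Real.exp 1 := by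
      rw [← Real.exp_add]; norm_num
    nlinarith
  have hlog7 : Real.log 7 ≤ 2 := by
    rw [← Real.log_exp (2:ℝ)]
    exact Real.log_le_log (by norm_num) hexp2.le
  have hlog7nn : (0:ℝ) ≤ Real.log 7 := Real.log_nonneg (by norm_num)
  have hlog87 : Real.log (8/7) ≤ 1/7 := by
    have := Real.log_le_sub_one_of_pos (show (0:ℝ) < 8/7 by norm_num)
    linarith
  have hlog87nn : (0:ℝ) ≤ Real.log (8/7) := Real.log_nonneg (by norm_num)
  have hlog4 : Real.log 4 ≤ 3/2 := by
    have h4 : (4:ℝ) = 2^(2:ℕ) := by norm_num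
    rw [h4, Real.log_pow]
    push_cast
    linarith
  have hlog4nn : (0:ℝ) ≤ Real.log 4 := Real.log_nonneg (by norm_num)
  have hlog8 : Real.log 8 ≤ 21/10 := by
    have h8 : (8:ℝ) = 2^(3:ℕ) := by norm_num
    rw [h8, Real.log_pow]
    push_cast
    linarith
  -- eventual conditions
  have hE1 : ∀ᶠ (z:ℝ) in atTop, (20:ℝ) ≤ z := eventually_ge_atTop 20
  have hE2 : ∀ᶠ (z:ℝ) in atTop, (2:ℝ) ≤ z^γ :=
    (tendsto_rpow_atTop hγ0).eventually_ge_atTop 2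
  have hrpow2 : ∀ᶠ (z:ℝ) in atTop, z^(γ+δ-1) ≤ δ/40 := by
    have h := tendsto_rpow_neg_atTop (show (0:ℝ) < 1-(γ+δ) by rw [hδdef]; linarith)
    have h' : Tendsto (fun z:ℝ => z^(γ+δ-1)) atTop (nhds 0) := by
      have heq : ∀ z:ℝ, z^(-(1-(γ+δ))) = z^(γ+δ-1) := fun z => by ring_nf
      simpa [heq] using h
    exact h'.eventually_le_const (by positivity)
  have hE4 : ∀ᶠ (z:ℝ) in atTop, (1:ℝ) ≤ Real.log z :=
    Real.tendsto_log_atTop.eventually_ge_atTop 1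
  have hE6 : ∀ᶠ (z:ℝ) in atTop, 16/(α'-α) ≤ Real.log z :=
    Real.tendsto_log_atTop.eventually_ge_atTop _
  have hAll : ∀ᶠ (z:ℝ) in atTop, ((20:ℝ) ≤ z ∧ (2:ℝ) ≤ z^γ ∧
      z^(γ+δ-1) ≤ δ/40 ∧ (1:ℝ) ≤ Real.log z ∧ 16/(α'-α) ≤ Real.log z) := by
    filter_upwards [hE1, hE2, hrpow2, hE4, hE6] with z a b d e f
    exact ⟨a, b, d, e, f⟩
  have hAllN : ∀ᶠ (n:ℕ) in atTop, ((20:ℝ) ≤ (n:ℝ) ∧ (2:ℝ) ≤ (n:ℝ)^γ ∧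
      (n:ℝ)^(γ+δ-1) ≤ δ/40 ∧ (1:ℝ) ≤ Real.log (n:ℝ) ∧
      16/(α'-α) ≤ Real.log (n:ℝ)) := tendsto_natCast_atTop_atTop.eventually hAll
  obtain ⟨N, hN⟩ := eventually_atTop.mp hAllN
  refine ⟨N, fun n hNn k hck hkexp => ?_⟩
  obtain ⟨hy20, hx2, hygd1, hlogy1, hlogy2⟩ := hN n hNn
  set y : ℝ := (n:ℝ) with hydef
  set x : ℝ := y^γ with hxdef
  have hy0 : (0:ℝ) < y := by linarith
  have hx0 : (0:ℝ) ≤ x := Real.rpow_nonneg hy0.le γ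
  have hx1 : (1:ℝ) ≤ x := by linarith
  have hlogynn : (0:ℝ) ≤ Real.log y := by linarith
  have hn20 : 20 ≤ n := by
    rw [hydef] at hy20
    exact_mod_cast hy20
  have hn0 : 0 < n := by omega
  set σ : ℝ := x / y with hσdef
  have hσ0 : (0:ℝ) ≤ σ := by positivity
  have hσy : σ * y = x := div_mul_cancel₀ x hy0.ne'
  set m : ℕ := n / 8 with hmdef
  have hm1 : 1 ≤ m := by omega
  have hmn : m ≤ n := by omega
  have hmy8 : (m:ℝ) ≤ y/8 := by
    rw [hydef]
    have h8 : (m:ℕ) * 8 ≤ n := by omega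
    have := (Nat.cast_le (α := ℝ)).mpr h8
    push_cast at this
    linarith
  have hym8 : y/8 ≤ (m:ℝ) + 1 := by
    rw [hydef]
    have h8 : n < (m+1) * 8 := by omega
    have := (Nat.cast_lt (α := ℝ)).mpr h8
    push_cast at this
    linarith
  -- by contradiction
  by_contra hcon
  push_neg at hcon
  set B : ℝ := (1 - α') / 2 * (y - 1) * Real.log y with hBdef
  set T : ℕ := captTime (hypercube n) k with hTdef
  have hTB : (T:ℝ) < B := hcon
  have hwin : CopsWinIn (hypercube n) k T := CaptL.copswin_captTime hck
  -- the star hypothesis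
  have hnx : (n:ℝ) + x ≤ (n:ℝ) * Real.exp σ := by
    have h := Real.add_one_le_exp σ
    have hmul : (n:ℝ) * (σ + 1) ≤ (n:ℝ) * Real.exp σ :=
      mul_le_mul_of_nonneg_left h (Nat.cast_nonneg n)
    have hμ : (n:ℝ) * (σ + 1) = (n:ℝ) + x := by
      show y * (σ + 1) = y + x
      have h3 : y * (σ+1) = σ * y + y := by ring
      rw [h3, hσy]
      ring
    linarith
  have hstar : ∀ d : ℕ, 1 ≤ d → d ≤ n →
      (d:ℝ) * Phi x (d-1) + ((n:ℝ) - d) * Phi x (d+1) ≤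
        (n:ℝ) * Real.exp σ * Phi x (d+1) := by
    intro d hd1 hdn
    have hp1 := CaptL.Phi_star hx0 d hd1
    have hΦpos := (CaptL.Phi_pos hx0 (d+1)).le
    have h3 : ((n:ℝ) + x) * Phi x (d+1) ≤ (n:ℝ) * Real.exp σ * Phi x (d+1) :=
      mul_le_mul_of_nonneg_right hnx hΦpos
    have h4 : (d:ℝ) * Phi x (d-1) + ((n:ℝ)-d) * Phi x (d+1) ≤
        ((d:ℝ)+x) * Phi x (d+1) + ((n:ℝ)-d) * Phi x (d+1) := by linarith [hp1]
    have h5 : ((d:ℝ)+x) * Phi x (d+1) + ((n:ℝ)-d) * Phi x (d+1) =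
        ((n:ℝ)+x) * Phi x (d+1) := by ring
    linarith [h3, h4]
  have hbound := CaptL.copswin_bound hn0 σ hσ0 (Phi x) (fun d => (CaptL.Phi_pos hx0 d).le)
    (CaptL.Phi_anti hx0) (le_of_eq (CaptL.Phi_one).symm) hstar hwin
  have hS := CaptL.sum_choose_Phi_le hx0 n m hm1 hmn
  -- bound exp(σ T) * k
  have hexpT : Real.exp (σ * T) * (k:ℝ) ≤ Real.exp (y^α + σ * B) := by
    rw [Real.exp_add]
    have hh1 : Real.exp (σ * T) ≤ Real.exp (σ * B) :=
      Real.exp_le_exp.mpr (mul_le_mul_of_nonneg_left hTB.le hσ0)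
    calc Real.exp (σ * T) * (k:ℝ) ≤ Real.exp (σ * B) * Real.exp (y^α) :=
          mul_le_mul hh1 hkexp (Nat.cast_nonneg k) (Real.exp_pos _).le
      _ = Real.exp (y^α) * Real.exp (σ * B) := by ring
  -- main numeric bounds
  have hyα : y^α ≤ x := by
    rw [hxdef]
    exact Real.rpow_le_rpow_of_exponent_le (by linarith) (by rw [hγdef]; linarith)
  have hfrac : x * (y - 1) / y ≤ x := by
    rw [div_le_iff₀ hy0]
    nlinarith
  have hσB2 : σ * B ≤ (1 - α')/2 * Real.log y * x := by
    have hEq : σ * B = (1 - α')/2 * Real.log y * (x * (y-1) / y) := by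
      rw [hσdef, hBdef]
      field_simp
    rw [hEq]
    apply mul_le_mul_of_nonneg_left hfrac
    have hα'1 : (0:ℝ) ≤ (1 - α')/2 := by linarith
    positivity
  have hxlogynn : (0:ℝ) ≤ x * Real.log y := mul_nonneg hx0 hlogynn
  have hσB1 : σ * B ≤ x/2 * Real.log y := by
    have hcmp : (1 - α')/2 * Real.log y * x ≤ (1/2) * Real.log y * x := by
      apply mul_le_mul_of_nonneg_right _ hx0
      apply mul_le_mul_of_nonneg_right _ hlogynn
      linarith
    linarith [hσB2, hcmp]
  -- x * log y ≤ y/40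
  have hlogy_rpow : Real.log y ≤ y^δ / δ := Real.log_le_rpow_div hy0.le hδ0
  have hxlogy : x * Real.log y ≤ y/40 := by
    have hq1 : x * Real.log y ≤ x * (y^δ/δ) := mul_le_mul_of_nonneg_left hlogy_rpow hx0
    have hq2 : x * y^δ = y^(γ+δ) := by
      rw [hxdef, ← Real.rpow_add hy0]
    have hq3 : y^(γ+δ) = y^(γ+δ-1) * y := by
      rw [← Real.rpow_add_one hy0.ne' (γ+δ-1)]
      norm_num
    have hq4 : y^(γ+δ-1) * y ≤ (δ/40) * y :=
      mul_le_mul_of_nonneg_right hygd1 hy0.le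
    have hq5 : x * (y^δ/δ) = x * y^δ / δ := by ring
    have hq6 : x * y^δ / δ ≤ (δ/40) * y / δ := by
      rw [hq2, hq3]
      gcongr
    have hq7 : (δ/40) * y / δ = y/40 := by
      field_simp
    linarith [hq1, hq5.le, hq6, hq7.le, hq7.ge]
  -- Condition C1
  have hC1 : Real.exp (y^α + σ*B) * Phi x 0 * (7^m * (8/7:ℝ)^n) ≤ (1/4) * 2^n := by
    have hΦ0 : Phi x 0 ≤ Real.exp x := by
      rw [CaptL.Phi_zero]
      have hb1 : Real.sqrt (1 + x/2) ≤ 1 + x := by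
        rw [show (1:ℝ) + x = Real.sqrt ((1+x)^2) from (Real.sqrt_sq (by linarith)).symm]
        apply Real.sqrt_le_sqrt
        nlinarith
      have hb2 : 1 + x ≤ Real.exp x := by
        have := Real.add_one_le_exp x
        linarith
      linarith
    have h7m : (7:ℝ)^m = Real.exp ((m:ℝ) * Real.log 7) := by
      rw [Real.exp_nat_mul, Real.exp_log (by norm_num : (0:ℝ) < 7)]
    have h87n : ((8/7:ℝ))^n = Real.exp ((n:ℝ) * Real.log (8/7)) := by
      rw [Real.exp_nat_mul, Real.exp_log (by norm_num : (0:ℝ) < 8/7)]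
    have h2n : ((2:ℝ))^n = Real.exp ((n:ℝ) * Real.log 2) := by
      rw [Real.exp_nat_mul, Real.exp_log (by norm_num : (0:ℝ) < 2)]
    have hquarter : (1/4:ℝ) = Real.exp (-(Real.log 4)) := by
      rw [Real.exp_neg, Real.exp_log (by norm_num : (0:ℝ) < 4)]
      norm_num
    calc Real.exp (y^α + σ*B) * Phi x 0 * (7^m * (8/7:ℝ)^n)
        ≤ Real.exp (y^α + σ*B) * Real.exp x * (7^m * (8/7:ℝ)^n) := by
          apply mul_le_mul_of_nonneg_right _ (by positivity)
          exact mul_le_mul_of_nonneg_left hΦ0 (Real.exp_pos _).le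
      _ = Real.exp ((y^α + σ*B) + x + ((m:ℝ) * Real.log 7 + (n:ℝ) * Real.log (8/7))) := by
          rw [h7m, h87n, ← Real.exp_add, ← Real.exp_add, ← Real.exp_add]
      _ ≤ Real.exp (-(Real.log 4) + (n:ℝ) * Real.log 2) := by
          apply Real.exp_le_exp.mpr
          have hm7 : (m:ℝ) * Real.log 7 ≤ (y/8) * 2 :=
            mul_le_mul hmy8 hlog7 hlog7nn (by linarith)
          have hn87 : y * Real.log (8/7) ≤ y * (1/7) :=
            mul_le_mul_of_nonneg_left hlog87 hy0.le
          have hylog2 : y * (69/100) ≤ y * Real.log 2 :=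
            mul_le_mul_of_nonneg_left hlog2lb hy0.le
          have hxx : x ≤ x * Real.log y := le_mul_of_one_le_right hx0 hlogy1
          have hyn : (n:ℝ) = y := rfl
          rw [hyn]
          linarith [hxlogy, hσB1, hyα, hxx, hm7, hn87, hylog2, hlog4, hy20]
      _ = Real.exp (-(Real.log 4)) * Real.exp ((n:ℝ) * Real.log 2) := by
          rw [← Real.exp_add]
      _ = (1/4) * 2^n := by rw [← hquarter, ← h2n]
  -- Condition C2
  have hC2 : Real.exp (y^α + σ*B) * Phi x m ≤ 1/4 := by
    have hΦm := CaptL.Phi_le_exp hx0 m hm1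
    have hlogm : Real.log y - Real.log 8 ≤ Real.log ((m:ℝ)+1+x) := by
      have hq1 : Real.log (y/8) = Real.log y - Real.log 8 :=
        Real.log_div hy0.ne' (by norm_num)
      rw [← hq1]
      apply Real.log_le_log (by positivity)
      linarith
    have hlog2x : Real.log (2+x) ≤ Real.log 2 + γ * Real.log y := by
      have hq1 : Real.log (2+x) ≤ Real.log (2*x) := by
        apply Real.log_le_log (by linarith)
        linarith
      have hq2 : Real.log (2*x) = Real.log 2 + Real.log x :=
        Real.log_mul (by norm_num) (by linarith)
      have hq3 : Real.log x = γ * Real.log y := by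
        rw [hxdef, Real.log_rpow hy0]
      linarith [hq1, hq2.le, hq3.le]
    have hexparg : y^α + σ*B + (-((x/2) * (Real.log ((m:ℝ)+1+x) - Real.log (2+x)))) ≤
        -(Real.log 4) := by
      have hkey : 4 * x ≤ (x/2) * ((α'-α)/2) * Real.log y := by
        have hα2 : 0 < α' - α := by linarith
        have hq1 : (16:ℝ) ≤ (α'-α) * Real.log y := by
          rw [div_le_iff₀ hα2] at hlogy2
          linarith
        have hq2 : (x/4) * 16 ≤ (x/4) * ((α'-α) * Real.log y) :=
          mul_le_mul_of_nonneg_left hq1 (by linarith)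
        linarith [hq2]
      have hd : (1-γ)*Real.log y - (Real.log 8 + Real.log 2) ≤
          Real.log ((m:ℝ)+1+x) - Real.log (2+x) := by
        linarith [hlogm, hlog2x]
      have hmain : (x/2)*((1-γ)*Real.log y - (Real.log 8 + Real.log 2)) ≤
          (x/2) * (Real.log ((m:ℝ)+1+x) - Real.log (2+x)) :=
        mul_le_mul_of_nonneg_left hd (by linarith)
      have hbnd : (x/2)*(Real.log 8 + Real.log 2) ≤ (7/5)*x := by
        have hq1 : Real.log 8 + Real.log 2 ≤ 14/5 := by linarith
        have hq2 : (x/2)*(Real.log 8 + Real.log 2) ≤ (x/2)*(14/5) :=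
          mul_le_mul_of_nonneg_left hq1 (by linarith)
        linarith
      have hsplit : (x/2)*((1-γ)*Real.log y) = (x/2)*((1-α')*Real.log y) +
          (x/2)*(((α'-α)/2)*Real.log y) := by
        rw [hγdef]; ring
      have hσB2' : σ*B ≤ (x/2)*((1-α')*Real.log y) := by
        have : (1 - α')/2 * Real.log y * x = (x/2)*((1-α')*Real.log y) := by ring
        linarith [hσB2, this.le, this.ge]
      have hexpand : (x/2)*((1-γ)*Real.log y - (Real.log 8 + Real.log 2)) =
          (x/2)*((1-γ)*Real.log y) - (x/2)*(Real.log 8 + Real.log 2) := by ring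
      have hkey' : 4 * x ≤ (x/2)*(((α'-α)/2)*Real.log y) := by
        have : (x/2) * ((α'-α)/2) * Real.log y = (x/2)*(((α'-α)/2)*Real.log y) := by ring
        linarith [hkey, this.le, this.ge]
      linarith [hyα, hσB2', hmain, hkey', hbnd, hsplit.le, hsplit.ge,
        hexpand.le, hexpand.ge, hlog4, hx1]
    calc Real.exp (y^α + σ*B) * Phi x m
        ≤ Real.exp (y^α + σ*B) *
          Real.exp (-((x/2) * (Real.log ((m:ℝ)+1+x) - Real.log (2+x)))) :=
          mul_le_mul_of_nonneg_left hΦm (Real.exp_pos _).le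
      _ = Real.exp (y^α + σ*B + (-((x/2) * (Real.log ((m:ℝ)+1+x) - Real.log (2+x))))) := by
          rw [← Real.exp_add]
      _ ≤ Real.exp (-(Real.log 4)) := Real.exp_le_exp.mpr hexparg
      _ = 1/4 := by
          rw [Real.exp_neg, Real.exp_log (by norm_num : (0:ℝ) < 4)]
          norm_num
  -- final contradiction
  have hSpos : (0:ℝ) ≤ ∑ d ∈ Finset.range (n+1), (n.choose d : ℝ) * Phi x d :=
    Finset.sum_nonneg fun d _ => mul_nonneg (Nat.cast_nonneg _) (CaptL.Phi_pos hx0 d).le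
  have hfinal : ((2:ℝ))^n ≤ (1/4) * 2^n + (1/4) * 2^n := by
    calc ((2:ℝ))^n ≤ Real.exp (σ * T) * k *
          ∑ d ∈ Finset.range (n+1), (n.choose d:ℝ) * Phi x d := hbound
      _ ≤ Real.exp (y^α + σ*B) * ∑ d ∈ Finset.range (n+1), (n.choose d:ℝ) * Phi x d :=
          mul_le_mul_of_nonneg_right hexpT hSpos
      _ ≤ Real.exp (y^α + σ*B) * (Phi x 0 * (7^m * (8/7:ℝ)^n) + Phi x m * 2^n) :=
          mul_le_mul_of_nonneg_left hS (Real.exp_pos _).le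
      _ = Real.exp (y^α + σ*B) * Phi x 0 * (7^m * (8/7:ℝ)^n) +
          Real.exp (y^α + σ*B) * Phi x m * 2^n := by ring
      _ ≤ (1/4) * 2^n + (1/4) * 2^n := by
          apply add_le_add hC1
          apply mul_le_mul_of_nonneg_right hC2 (by positivity)
  have h2npos : (0:ℝ) < 2^n := by positivity
  linarith
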